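/- Let σ₁₁, σ₁₂, σ₂₁, σ₂₂, b₁₁, b₂₂, θ ∈ (0,∞), b₂₁ ∈ (−∞,0], κ₁, κ₂, u₃ ∈ ℝ and u₄ ∈ (−∞,0]. Let K₁, K₂ : [0,∞) → ℂ be differentiable and satisfy K₁′(t) = (σ₁₁²/2)·K₁(t)² − b₁₁·K₁(t) − b₂₁·K₂(t) − i·u₃·κ₁·e^{−θt} + u₄·σ₂₁²·e^{−2θt} and K₂′(t) = (σ₁₂²/2)·K₂(t)² − b₂₂·K₂(t) − i·u₃·κ₂·e^{−θt} + u₄·σ₂₂²·e^{−2θt} for all t ≥ 0. If Re K₁(0) ≤ 0 and Re K₂(0) ≤ 0, then Re K₁(t) ≤ 0 and Re K₂(t) ≤ 0 for all t ≥ 0. -/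

import Mathlib

open MeasureTheory Filter Real Complex

open Set Topology in
private lemma quad_nonpos_invariance {T : ℝ} (h h' : ℝ → ℝ) (c b : ℝ) (hc : 0 ≤ c)
    (hderiv : ∀ t ∈ Icc (0:ℝ) T, HasDerivAt h (h' t) t)
    (hbound : ∀ t ∈ Icc (0:ℝ) T, h' t ≤ c * h t ^ 2 - b * h t)
    (h0 : h 0 ≤ 0) : ∀ t ∈ Icc (0:ℝ) T, h t ≤ 0 := by
  rcases le_or_gt T 0 with hT | hT
  · intro t ht
    have : t = 0 := le_antisymm (ht.2.trans hT) ht.1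
    simpa [this] using h0
  have hcont : ContinuousOn h (Icc 0 T) := fun t ht =>
    (hderiv t ht).continuousAt.continuousWithinAt
  obtain ⟨M, hM⟩ : BddAbove (h '' Icc 0 T) :=
    (isCompact_Icc.image_of_continuousOn hcont).bddAbove
  set M' : ℝ := max M 0 with hM'def
  have hM'0 : 0 ≤ M' := le_max_right _ _
  set L : ℝ := c * M' + |b| with hLdef
  have hL0 : 0 ≤ L := add_nonneg (mul_nonneg hc hM'0) (abs_nonneg b)
  set f : ℝ → ℝ := fun t => max (h t) 0 with hfdef
  have key : ∀ x ∈ Icc (0:ℝ) T, f x ≤ gronwallBound 0 L 0 (x - 0) := by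
    apply le_gronwallBound_of_liminf_deriv_right_le
      (f' := fun t => L * max (h t) 0)
    · exact hcont.sup continuousOn_const
    · intro x hx r hr
      have hxmem : x ∈ Icc (0:ℝ) T := Ico_subset_Icc_self hx
      rcases lt_or_ge (h x) 0 with hneg | hpos
      · -- h x < 0 : f is 0 near x
        have hr0 : 0 < r := by
          have : max (h x) 0 = 0 := max_eq_right hneg.le
          simpa [this] using hr
        have hev : ∀ᶠ z in 𝓝 x, h z < 0 :=
          (hderiv x hxmem).continuousAt.tendsto.eventually_lt_const hneg
        have : ∀ᶠ z in 𝓝[>] x, (z - x)⁻¹ * (f z - f x) < r := by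
          filter_upwards [nhdsWithin_le_nhds hev] with z hz
          have h1 : max (h z) 0 = 0 := max_eq_right hz.le
          have h2 : max (h x) 0 = 0 := max_eq_right hneg.le
          simp [hfdef, h1, h2, hr0]
        exact this.frequently
      · -- h x ≥ 0
        have hfx : f x = h x := max_eq_left hpos
        have hxM : h x ≤ M' := le_trans (hM ⟨x, hxmem, rfl⟩) (le_max_left _ _)
        have hlin : h' x ≤ L * h x := by
          have h1 : c * h x ^ 2 ≤ c * M' * h x := by
            nlinarith [mul_nonneg (mul_nonneg hc hpos) (sub_nonneg.mpr hxM)]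
          have h2 : -(b * h x) ≤ |b| * h x := by
            have := neg_abs_le b
            nlinarith [abs_nonneg b]
          have := hbound x hxmem
          nlinarith
        have hr' : h' x < r := lt_of_le_of_lt hlin (by simpa [max_eq_left hpos] using hr)
        have hr0 : 0 < r :=
          lt_of_le_of_lt (by positivity : (0:ℝ) ≤ L * h x) (by simpa [max_eq_left hpos] using hr)
        have hslope : ∀ᶠ z in 𝓝[>] x, slope h x z < r := by
          have := hasDerivAt_iff_tendsto_slope.mp (hderiv x hxmem)
          have := this.eventually_lt_const hr'
          exact nhdsWithin_mono x (fun z hz => ne_of_gt hz) this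
        have : ∀ᶠ z in 𝓝[>] x, (z - x)⁻¹ * (f z - f x) < r := by
          filter_upwards [hslope, self_mem_nhdsWithin] with z hz hz'
          have hzx : 0 < z - x := sub_pos.mpr hz'
          rcases le_or_gt (h z) 0 with hle | hgt
          · have : f z = 0 := max_eq_right hle
            rw [this, hfx]
            have : (z - x)⁻¹ * (0 - h x) ≤ 0 := by
              apply mul_nonpos_of_nonneg_of_nonpos (by positivity)
              linarith
            linarith
          · have : f z = h z := max_eq_left hgt.le
            rw [this, hfx]
            calc (z - x)⁻¹ * (h z - h x) = slope h x z := by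
                  rw [slope_def_field]; ring
              _ < r := hz
        exact this.frequently
    · simp [hfdef, max_eq_right h0]
    · intro x hx; simp [hfdef]
  intro t ht
  have := key t ht
  rw [gronwallBound_ε0_δ0] at this
  exact le_trans (le_max_left _ _) this

theorem riccati_halfplane_invariance
    (σ11 σ12 σ21 σ22 b11 b22 θ : ℝ)
    (hσ11 : 0 < σ11) (hσ12 : 0 < σ12) (hσ21 : 0 < σ21) (hσ22 : 0 < σ22)
    (hb11 : 0 < b11) (hb22 : 0 < b22) (hθ : 0 < θ)
    (b21 : ℝ) (hb21 : b21 ≤ 0)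
    (κ1 κ2 u3 : ℝ) (u4 : ℝ) (hu4 : u4 ≤ 0)
    (K1 K2 : ℝ → ℂ)
    (hK1 : ∀ t, 0 ≤ t → HasDerivAt K1
      ((σ11 ^ 2 / 2 : ℂ) * K1 t ^ 2 - (b11 : ℂ) * K1 t - (b21 : ℂ) * K2 t
        - Complex.I * (u3 : ℂ) * (κ1 : ℂ) * (Real.exp (-θ * t) : ℂ)
        + (u4 : ℂ) * (σ21 ^ 2 : ℂ) * (Real.exp (-2 * θ * t) : ℂ)) t)
    (hK2 : ∀ t, 0 ≤ t → HasDerivAt K2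
      ((σ12 ^ 2 / 2 : ℂ) * K2 t ^ 2 - (b22 : ℂ) * K2 t
        - Complex.I * (u3 : ℂ) * (κ2 : ℂ) * (Real.exp (-θ * t) : ℂ)
        + (u4 : ℂ) * (σ22 ^ 2 : ℂ) * (Real.exp (-2 * θ * t) : ℂ)) t)
    (hK10 : (K1 0).re ≤ 0) (hK20 : (K2 0).re ≤ 0) :
    ∀ t, 0 ≤ t → (K1 t).re ≤ 0 ∧ (K2 t).re ≤ 0 := by
  -- real parts have derivatives equal to the real part of the complex derivative
  have hre2 : ∀ t, 0 ≤ t → HasDerivAt (fun s => (K2 s).re)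
      (((σ12 ^ 2 / 2 : ℂ) * K2 t ^ 2 - (b22 : ℂ) * K2 t
        - Complex.I * (u3 : ℂ) * (κ2 : ℂ) * (Real.exp (-θ * t) : ℂ)
        + (u4 : ℂ) * (σ22 ^ 2 : ℂ) * (Real.exp (-2 * θ * t) : ℂ)).re) t := by
    intro t ht
    exact (Complex.reCLM.hasFDerivAt.comp_hasDerivAt t (hK2 t ht))
  have hre1 : ∀ t, 0 ≤ t → HasDerivAt (fun s => (K1 s).re)
      (((σ11 ^ 2 / 2 : ℂ) * K1 t ^ 2 - (b11 : ℂ) * K1 t - (b21 : ℂ) * K2 t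
        - Complex.I * (u3 : ℂ) * (κ1 : ℂ) * (Real.exp (-θ * t) : ℂ)
        + (u4 : ℂ) * (σ21 ^ 2 : ℂ) * (Real.exp (-2 * θ * t) : ℂ)).re) t := by
    intro t ht
    exact (Complex.reCLM.hasFDerivAt.comp_hasDerivAt t (hK1 t ht))
  -- step 1 : K2
  have step2 : ∀ t, 0 ≤ t → (K2 t).re ≤ 0 := by
    intro t ht
    refine quad_nonpos_invariance (T := t) (fun s => (K2 s).re) _
      (σ12 ^ 2 / 2) b22 (by positivity)
      (fun s hs => hre2 s hs.1) ?_ hK20 t ⟨ht, le_refl t⟩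
    intro s hs
    have he1 : (0:ℝ) < Real.exp (-θ * s) := Real.exp_pos _
    have he2 : (0:ℝ) < Real.exp (-2 * θ * s) := Real.exp_pos _
    have hterm : u4 * σ22 ^ 2 * Real.exp (-2 * θ * s) ≤ 0 := by
      have : u4 * σ22 ^ 2 ≤ 0 := mul_nonpos_of_nonpos_of_nonneg hu4 (by positivity)
      exact mul_nonpos_of_nonpos_of_nonneg this he2.le
    simp only [Complex.add_re, Complex.sub_re, Complex.mul_re, Complex.mul_im,
      Complex.ofReal_re, Complex.ofReal_im, Complex.I_re, Complex.I_im,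
      Complex.div_re, Complex.div_im, sq, Complex.normSq_apply, Complex.re_ofNat,
      Complex.im_ofNat, pow_two]
    ring_nf at hterm he2 ⊢ <;> skip
    nlinarith [sq_nonneg (K2 s).im, sq_nonneg σ12, sq_nonneg (K2 s).re]
  -- step 2 : K1
  have step1 : ∀ t, 0 ≤ t → (K1 t).re ≤ 0 := by
    intro t ht
    refine quad_nonpos_invariance (T := t) (fun s => (K1 s).re) _
      (σ11 ^ 2 / 2) b11 (by positivity)
      (fun s hs => hre1 s hs.1) ?_ hK10 t ⟨ht, le_refl t⟩
    intro s hs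
    have he2 : (0:ℝ) < Real.exp (-2 * θ * s) := Real.exp_pos _
    have hterm : u4 * σ21 ^ 2 * Real.exp (-2 * θ * s) ≤ 0 := by
      have : u4 * σ21 ^ 2 ≤ 0 := mul_nonpos_of_nonpos_of_nonneg hu4 (by positivity)
      exact mul_nonpos_of_nonpos_of_nonneg this he2.le
    have hterm2 : b21 * (K2 s).re ≥ 0 := by nlinarith [step2 s hs.1]
    simp only [Complex.add_re, Complex.sub_re, Complex.mul_re, Complex.mul_im,
      Complex.ofReal_re, Complex.ofReal_im, Complex.I_re, Complex.I_im,
      Complex.div_re, Complex.div_im, sq, Complex.normSq_apply, Complex.re_ofNat,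
      Complex.im_ofNat, pow_two]
    ring_nf at hterm he2 ⊢ <;> skip
    nlinarith [sq_nonneg (K1 s).im, sq_nonneg σ11, sq_nonneg (K1 s).re]
  exact fun t ht => ⟨step1 t ht, step2 t ht⟩
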